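/- Let P be a probability measure on a measurable space (X, 𝒜), let k ∈ ℕ, and let f₁,…,f_k be real-valued P-integrable functions on X. Then there exists a probability measure Q on (X, 𝒜) concentrated on at most k + 1 points (i.e. Q is a convex combination of at most k+1 Dirac measures at points of X) such that ∫ fᵢ dQ = ∫ fᵢ dP for every i ∈ {1,…,k}. -/

import Mathlib

open MeasureTheory Module Set

lemma weak_sep {E : Type} [NormedAddCommGroup E] [NormedSpace ℝ E] [FiniteDimensional ℝ E]
    [Nontrivial E] {s : Set E} {v : E} (hv : v ∉ convexHull ℝ s) :
    ∃ l : E →L[ℝ] ℝ, l ≠ 0 ∧ ∀ y ∈ s, l v ≤ l y := by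
  by_contra hcon
  push_neg at hcon
  have hcl : ∀ y : s, IsClosed {l : E →L[ℝ] ℝ | l v ≤ l (y : E)} := fun y =>
    isClosed_le (ContinuousLinearMap.apply ℝ ℝ v).continuous
      (ContinuousLinearMap.apply ℝ ℝ (y : E)).continuous
  have hempty : (Metric.sphere (0 : E →L[ℝ] ℝ) 1) ∩ ⋂ y : s, {l : E →L[ℝ] ℝ | l v ≤ l (y : E)} = ∅ := by
    ext l
    simp only [Set.mem_inter_iff, Set.mem_iInter, mem_sphere_zero_iff_norm, Set.mem_empty_iff_false,
      iff_false, not_and, Set.mem_setOf_eq, not_forall]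
    intro hl
    have hl0 : l ≠ 0 := by intro h; rw [h] at hl; simp at hl
    obtain ⟨y, hy, hlt⟩ := hcon l hl0
    exact ⟨⟨y, hy⟩, by push_neg; exact hlt⟩
  obtain ⟨t, ht⟩ := (isCompact_sphere (0 : E →L[ℝ] ℝ) 1).elim_finite_subfamily_closed _ hcl hempty
  -- produce a unit functional `l` with `l v ≤ l y` for all `y ∈ t`, contradiction
  obtain ⟨l, hl1, hl⟩ : ∃ l : E →L[ℝ] ℝ, ‖l‖ = 1 ∧ ∀ y ∈ t, l v ≤ l (y : E) := by
    rcases t.eq_empty_or_nonempty with rfl | htne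
    · obtain ⟨x, hx⟩ := exists_ne (0 : E)
      obtain ⟨g, hg1, _⟩ := exists_dual_vector ℝ x (norm_ne_zero_iff.mpr hx)
      exact ⟨g, hg1, by simp⟩
    · have hclosed : IsClosed (convexHull ℝ ((↑) '' (t : Set s) : Set E)) :=
        ((t.finite_toSet).image _).isClosed_convexHull (𝕜 := ℝ)
      have hvnot : v ∉ convexHull ℝ ((↑) '' (t : Set s) : Set E) := by
        intro h
        exact hv (convexHull_mono (by rintro _ ⟨⟨y, hy⟩, -, rfl⟩; exact hy) h)
      obtain ⟨g, u, hgu, hgt⟩ := geometric_hahn_banach_point_closed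
        ((convex_convexHull ℝ _)) hclosed hvnot
      have hg0 : g ≠ 0 := by
        rintro rfl
        obtain ⟨y, hy⟩ := htne
        have := hgt _ (subset_convexHull ℝ _ ⟨y, hy, rfl⟩)
        simp at hgu this; linarith
      refine ⟨‖g‖⁻¹ • g, ?_, ?_⟩
      · have := norm_smul (β := E →L[ℝ] ℝ) (‖g‖⁻¹) g
        rw [this]; simp; rw [inv_mul_cancel₀ (norm_ne_zero_iff.mpr hg0)]
      · intro y hy
        have h1 : g v ≤ g (y : E) := by
          have := hgt _ (subset_convexHull ℝ _ ⟨y, hy, rfl⟩)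
          linarith
        simp only [ContinuousLinearMap.smul_apply, smul_eq_mul]
        have : (0:ℝ) ≤ ‖g‖⁻¹ := by positivity
        nlinarith
  have : l ∈ Metric.sphere (0 : E →L[ℝ] ℝ) 1 ∩ ⋂ y ∈ t, {l : E →L[ℝ] ℝ | l v ≤ l (y : E)} := by
    refine ⟨by simpa using hl1, ?_⟩
    simp only [Set.mem_iInter]
    exact fun y hy => hl y hy
  rw [ht] at this
  exact this

lemma key_mean_mem : ∀ (n : ℕ) (E : Type) [NormedAddCommGroup E] [InnerProductSpace ℝ E]
    [FiniteDimensional ℝ E], finrank ℝ E ≤ n →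
    ∀ {X : Type*} [MeasurableSpace X] (P : Measure X) [IsProbabilityMeasure P]
    (G : X → E), StronglyMeasurable G → Integrable G P →
    ∀ S : Set X, MeasurableSet S → P S = 1 →
    (∫ x, G x ∂P) ∈ convexHull ℝ (G '' S) := by
  intro n
  induction n with
  | zero =>
    intro E _ _ _ hE X _ P _ G hGm hGi S hSm hS
    have : Subsingleton E := finrank_zero_iff.mp (Nat.le_zero.mp hE)
    have hSne : S.Nonempty := by
      rcases S.eq_empty_or_nonempty with rfl | h
      · simp at hS
      · exact h
    obtain ⟨x0, hx0⟩ := hSne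
    have : (∫ x, G x ∂P) = G x0 := Subsingleton.elim _ _
    rw [this]
    exact subset_convexHull ℝ _ ⟨x0, hx0, rfl⟩
  | succ n ih =>
    intro E _ _ _ hE X _ P _ G hGm hGi S hSm hS
    set v := ∫ x, G x ∂P with hv_def
    by_contra hv
    have hSne : S.Nonempty := by
      rcases S.eq_empty_or_nonempty with rfl | h
      · simp at hS
      · exact h
    rcases subsingleton_or_nontrivial E with hsub | hnt
    · obtain ⟨x0, hx0⟩ := hSne
      exact hv (by
        have : v = G x0 := Subsingleton.elim _ _
        rw [this]; exact subset_convexHull ℝ _ ⟨x0, hx0, rfl⟩)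
    obtain ⟨l, hl0, hl⟩ := weak_sep hv
    -- a.e. equality
    have haeS : ∀ᵐ x ∂P, x ∈ S := by
      rw [ae_iff]
      have : P Sᶜ = 0 := (prob_compl_eq_zero_iff hSm).mpr hS
      exact this
    have hlG : Integrable (fun x => l (G x) - l v) P :=
      (l.integrable_comp hGi).sub (integrable_const _)
    have hnn : 0 ≤ᵐ[P] fun x => l (G x) - l v := by
      filter_upwards [haeS] with x hx
      have := hl (G x) ⟨x, hx, rfl⟩
      simp [this]
    have hint0 : (∫ x, (l (G x) - l v) ∂P) = 0 := by
      rw [integral_sub (l.integrable_comp hGi) (integrable_const _),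
        l.integral_comp_comm hGi, integral_const]
      simp [← hv_def]
    have hzero : ∀ᵐ x ∂P, l (G x) - l v = 0 := by
      have := (integral_eq_zero_iff_of_nonneg_ae hnn hlG).mp hint0
      filter_upwards [this] with x hx using hx
    -- new full-measure set
    set S' : Set X := S ∩ {x | l (G x) = l v} with hS'_def
    have hmS' : MeasurableSet S' := by
      refine hSm.inter ?_
      have : Measurable fun x => l (G x) :=
        (l.continuous.comp_stronglyMeasurable hGm).measurable
      exact this (measurableSet_singleton (l v))
    have hS'1 : P S' = 1 := by
      rw [← prob_compl_eq_zero_iff hmS']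
      have : ∀ᵐ x ∂P, x ∈ S' := by
        filter_upwards [haeS, hzero] with x h1 h2
        exact ⟨h1, by simpa [sub_eq_zero] using h2⟩
      rw [ae_iff] at this
      exact this
    -- project to the kernel of l
    set K := LinearMap.ker (l : E →ₗ[ℝ] ℝ) with hK_def
    have hfinK : finrank ℝ K ≤ n := by
      have h1 := LinearMap.finrank_range_add_finrank_ker (l : E →ₗ[ℝ] ℝ)
      have hsurj : LinearMap.range (l : E →ₗ[ℝ] ℝ) = ⊤ := by
        rw [LinearMap.range_eq_top]
        intro c
        obtain ⟨x, hx⟩ : ∃ x, l x ≠ 0 := by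
          by_contra h; push_neg at h
          exact hl0 (by ext x; simp [h x])
        exact ⟨(c / l x) • x, by simp [div_mul_cancel₀, hx]⟩
      rw [hsurj, finrank_top, finrank_self] at h1
      have hKl : finrank ℝ (LinearMap.ker (l : E →ₗ[ℝ] ℝ)) = finrank ℝ K := rfl
      omega
    set π := K.orthogonalProjectionOnto with hπ_def
    set G' : X → K := fun x => π (G x - v) with hG'_def
    have hG'm : StronglyMeasurable G' :=
      (K.orthogonalProjectionOnto).continuous.comp_stronglyMeasurable
        (hGm.sub stronglyMeasurable_const)
    have hG'i : Integrable G' P :=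
      (K.orthogonalProjectionOnto).integrable_comp (hGi.sub (integrable_const v))
    have hG'int : (∫ x, G' x ∂P) = 0 := by
      have h1 : (∫ x, G' x ∂P) = π (∫ x, (G x - v) ∂P) :=
        π.integral_comp_comm (hGi.sub (integrable_const v))
      rw [h1, integral_sub hGi (integrable_const v), integral_const]
      simp [measure_univ, ← hv_def]
    have hmem := ih K hfinK P G' hG'm hG'i S' hmS' hS'1
    rw [hG'int] at hmem
    -- push forward through the inclusion K ↪ E
    have hmem2 : (0 : E) ∈ convexHull ℝ ((fun x => G x - v) '' S') := by
      have := Set.mem_image_of_mem (K.subtype) hmem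
      rw [K.subtype.image_convexHull] at this
      have himg : K.subtype '' (G' '' S') = (fun x => G x - v) '' S' := by
        rw [Set.image_image]
        apply Set.image_congr
        intro x hx
        have hxK : G x - v ∈ K := by
          simp only [hK_def, LinearMap.mem_ker]
          have : l (G x) = l v := hx.2
          simp [map_sub, this]
        simp only [Submodule.coe_subtype, hG'_def]
        exact K.starProjection_eq_self_iff.mpr hxK
      rw [himg] at this
      simpa using this
    -- translate back
    have hmem3 : v ∈ convexHull ℝ (G '' S') := by
      set φ : E →ᵃ[ℝ] E := (AffineEquiv.constVAdd ℝ E (-v)).toAffineMap with hφ_def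
      have himg : (fun x => G x - v) '' S' = φ '' (G '' S') := by
        rw [Set.image_image]
        apply Set.image_congr
        intro x _
        simp [hφ_def, neg_add_eq_sub]
      rw [himg, ← AffineMap.image_convexHull] at hmem2
      obtain ⟨y, hy, hy0⟩ := hmem2
      have hyv : y = v := by
        have h0 : -v + y = 0 := by
          simpa [hφ_def, vadd_eq_add] using hy0
        have h1 : y - v = 0 := by rwa [neg_add_eq_sub] at h0
        exact sub_eq_zero.mp h1
      rwa [hyv] at hy
    exact hv (convexHull_mono (Set.image_mono Set.inter_subset_left) hmem3)

/-- **Theorem (Richter).** Let `P` be a probability measure on a measurable space `X`,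
`k ∈ ℕ`, and `f₁, …, f_k` real-valued `P`-integrable functions on `X`. Then there is a
probability measure `Q` on `X`, a convex combination of at most `k + 1` Dirac measures,
with `∫ fᵢ dQ = ∫ fᵢ dP` for all `i`. -/
theorem richter_reduction {X : Type*} [MeasurableSpace X]
    (P : Measure X) [IsProbabilityMeasure P]
    (k : ℕ) (hk : 0 < k) (f : Fin k → X → ℝ) (hf : ∀ i, Integrable (f i) P) :
    ∃ (m : ℕ) (x : Fin m → X) (p : Fin m → ENNReal) (Q : Measure X),
      m ≤ k + 1 ∧ (∑ j, p j) = 1 ∧ Q = ∑ j, p j • Measure.dirac (x j) ∧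
      ∀ i, (∫ y, f i y ∂Q) = ∫ y, f i y ∂P := by
  classical
  -- strongly measurable representatives
  set g : Fin k → X → ℝ := fun i => ((hf i).1).mk (f i) with hg_def
  have hgm : ∀ i, StronglyMeasurable (g i) := fun i => ((hf i).1).stronglyMeasurable_mk
  have hge : ∀ i, f i =ᵐ[P] g i := fun i => ((hf i).1).ae_eq_mk
  have hgi : ∀ i, Integrable (g i) P := fun i => (hf i).congr (hge i)
  -- a measurable null set outside of which f = g
  set N : Set X := toMeasurable P (⋃ i, {x | f i x ≠ g i x}) with hN_def
  have hNm : MeasurableSet N := measurableSet_toMeasurable _ _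
  have hNnull : P N = 0 := by
    rw [hN_def, measure_toMeasurable]
    exact measure_iUnion_null fun i => (hge i)
  set S : Set X := Nᶜ with hS_def
  have hSm : MeasurableSet S := hNm.compl
  have hS1 : P S = 1 := by
    rw [hS_def, ← prob_compl_eq_zero_iff hNm.compl, compl_compl]
    exact hNnull
  have hfg : ∀ i, ∀ x ∈ S, f i x = g i x := by
    intro i x hx
    by_contra h
    exact hx (subset_toMeasurable _ _ (Set.mem_iUnion.mpr ⟨i, h⟩))
  -- the vector-valued function
  set G : X → EuclideanSpace ℝ (Fin k) := fun x => (EuclideanSpace.equiv (Fin k) ℝ).symm (fun i => g i x) with hG_def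
  have hGapp : ∀ x i, G x i = g i x := fun x i => rfl
  have hGm : StronglyMeasurable G := by
    refine (EuclideanSpace.equiv (Fin k) ℝ).symm.continuous.comp_stronglyMeasurable ?_
    exact (measurable_pi_lambda _ (fun i => (hgm i).measurable)).stronglyMeasurable
  have hGi : Integrable G P := by
    have hGeq : G = fun x => ∑ i, (g i x) • (EuclideanSpace.single i (1:ℝ)) := by
      funext x
      apply PiLp.ext
      intro j
      rw [hGapp]
      rw [show ((∑ i, (g i x) • (EuclideanSpace.single i (1:ℝ))) j)
          = ∑ i, ((g i x) • (EuclideanSpace.single i (1:ℝ)) : EuclideanSpace ℝ (Fin k)) j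
        from by rw [WithLp.ofLp_sum]; exact Finset.sum_apply j Finset.univ _]
      simp [EuclideanSpace.single_apply]
    rw [hGeq]
    exact integrable_finset_sum _ fun i _ => (hgi i).smul_const _
  set v : EuclideanSpace ℝ (Fin k) := ∫ x, G x ∂P with hv_def
  have hproj : ∀ i, (EuclideanSpace.proj i : EuclideanSpace ℝ (Fin k) →L[ℝ] ℝ) v = ∫ x, f i x ∂P := by
    intro i
    rw [hv_def, ← (EuclideanSpace.proj i : EuclideanSpace ℝ (Fin k) →L[ℝ] ℝ).integral_comp_comm hGi]
    exact integral_congr_ae ((hge i).symm.mono fun x hx => by simp [hGapp, hx])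
  -- barycenter lies in the hull
  have hvmem : v ∈ convexHull ℝ (G '' S) :=
    key_mean_mem k (EuclideanSpace ℝ (Fin k)) (le_of_eq finrank_euclideanSpace_fin) P G hGm hGi S hSm hS1
  -- Carathéodory
  obtain ⟨ι, hfin, z, w, hzs, hai, hwpos, hwsum, hwz⟩ :=
    eq_pos_convex_span_of_mem_convexHull hvmem
  have hcard : Fintype.card ι ≤ k + 1 := by
    have h1 := hai.card_le_finrank_succ
    have h2 : finrank ℝ (vectorSpan ℝ (Set.range z)) ≤ finrank ℝ (EuclideanSpace ℝ (Fin k)) :=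
      Submodule.finrank_le _
    have h3 : finrank ℝ (EuclideanSpace ℝ (Fin k)) = k := finrank_euclideanSpace_fin
    omega
  set m := Fintype.card ι with hm_def
  set e : Fin m ≃ ι := (Fintype.equivFin ι).symm with he_def
  have hzS : ∀ j : Fin m, ∃ x ∈ S, G x = z (e j) := fun j => by
    obtain ⟨x, hx, hGx⟩ := hzs ⟨e j, rfl⟩
    exact ⟨x, hx, hGx⟩
  choose x hxS hxG using hzS
  set p : Fin m → ENNReal := fun j => ENNReal.ofReal (w (e j)) with hp_def
  have hpsum : (∑ j, p j) = 1 := by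
    rw [hp_def]
    rw [← ENNReal.ofReal_sum_of_nonneg (fun j _ => (hwpos (e j)).le)]
    rw [Equiv.sum_comp e w, hwsum]
    simp
  refine ⟨m, x, p, ∑ j, p j • Measure.dirac (x j), hcard, hpsum, rfl, ?_⟩
  intro i
  -- integrability wrt each dirac
  have hfd : ∀ j : Fin m, f i =ᵐ[Measure.dirac (x j)] g i := by
    intro j
    have hN0 : Measure.dirac (x j) N = 0 := by
      have hxN : x j ∉ N := hxS j
      rw [Measure.dirac_apply' _ hNm]
      simp [Set.indicator_apply, hxN]
    refine measure_mono_null ?_ hN0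
    intro y hy
    exact subset_toMeasurable _ _ (Set.mem_iUnion.mpr ⟨i, hy⟩)
  have hgint : ∀ j : Fin m, Integrable (g i) (Measure.dirac (x j)) := by
    intro j
    refine ⟨(hgm i).aestronglyMeasurable, ?_⟩
    rw [hasFiniteIntegral_def, lintegral_dirac' _ ((hgm i).measurable.enorm)]
    exact enorm_lt_top
  have hfint : ∀ j : Fin m, Integrable (f i) (p j • Measure.dirac (x j)) := by
    intro j
    exact ((hgint j).congr (hfd j).symm).smul_measure ENNReal.ofReal_ne_top
  rw [integral_finset_sum_measure (fun j _ => hfint j)]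
  have hterm : ∀ j : Fin m, (∫ y, f i y ∂(p j • Measure.dirac (x j)))
      = w (e j) * (z (e j) i) := by
    intro j
    rw [integral_smul_measure, integral_congr_ae (hfd j), integral_dirac' _ _ (hgm i)]
    rw [hp_def, ENNReal.toReal_ofReal (hwpos (e j)).le]
    have : g i (x j) = z (e j) i := by rw [← hxG j]; rfl
    rw [this]
    rfl
  rw [Finset.sum_congr rfl (fun j _ => hterm j)]
  -- compute the right-hand side
  rw [← hproj i, ← hwz]
  rw [map_sum]
  rw [← Equiv.sum_comp e (fun i' => (EuclideanSpace.proj i : EuclideanSpace ℝ (Fin k) →L[ℝ] ℝ) (w i' • z i'))]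
  refine Finset.sum_congr rfl fun j _ => ?_
  simp [smul_eq_mul]
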